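/- For every natural number n with 3 ≤ n, one has (2 * n : ℝ) * Real.tan (Real.pi / (2 * n)) − Real.pi < ((n : ℝ) * Real.tan (Real.pi / n) − Real.pi) / 2. -/

import Mathlib

open Real Set

private lemma gderiv {x : ℝ} (hx : x ∈ Set.Icc 0 (π/6)) :
    HasDerivAt (fun y : ℝ => 2*y + Real.tan (2*y) - 4 * Real.tan y)
      (2 + 2/(Real.cos (2*x))^2 - 4/(Real.cos x)^2) x := by
  have hpi := Real.pi_pos
  have hc1 : Real.cos x ≠ 0 := by
    have : Real.cos x > 0 := Real.cos_pos_of_mem_Ioo ⟨by linarith [hx.1], by linarith [hx.2]⟩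
    linarith
  have hc2 : Real.cos (2*x) ≠ 0 := by
    have : Real.cos (2*x) > 0 :=
      Real.cos_pos_of_mem_Ioo ⟨by linarith [hx.1], by linarith [hx.2]⟩
    linarith
  have hid : HasDerivAt (fun y : ℝ => 2*y) 2 x := by
    simpa using (hasDerivAt_id x).const_mul (2:ℝ)
  have h1 : HasDerivAt (fun y : ℝ => Real.tan (2*y)) (1/(Real.cos (2*x))^2 * 2) x :=
    (Real.hasDerivAt_tan hc2).comp x hid
  have h2 : HasDerivAt (fun y : ℝ => Real.tan y) (1/(Real.cos x)^2) x :=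
    Real.hasDerivAt_tan hc1
  have : HasDerivAt (fun y : ℝ => 2*y + Real.tan (2*y) - 4 * Real.tan y)
      (2 + 1/(Real.cos (2*x))^2 * 2 - 4 * (1/(Real.cos x)^2)) x :=
    (hid.add h1).sub (h2.const_mul 4)
  convert this using 1
  ring

private lemma key {x : ℝ} (hx : x ∈ Set.Ioc 0 (π/6)) :
    4 * Real.tan x < 2 * x + Real.tan (2*x) := by
  have hpi := Real.pi_pos
  have hmono : StrictMonoOn (fun y : ℝ => 2*y + Real.tan (2*y) - 4 * Real.tan y)
      (Set.Icc 0 (π/6)) := by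
    apply strictMonoOn_of_deriv_pos (convex_Icc _ _)
    · intro y hy
      exact (gderiv hy).continuousAt.continuousWithinAt
    · intro y hy
      rw [interior_Icc] at hy
      rw [(gderiv (Ioo_subset_Icc_self hy)).deriv]
      have hy1 : (0:ℝ) < y := hy.1
      have hy2 : y < π/6 := hy.2
      have hcpos : Real.cos y > 0 :=
        Real.cos_pos_of_mem_Ioo ⟨by linarith, by linarith⟩
      have hc2pos : Real.cos (2*y) > 0 :=
        Real.cos_pos_of_mem_Ioo ⟨by linarith, by linarith⟩
      have hlt1 : Real.cos y < 1 := by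
        have := Real.cos_lt_cos_of_nonneg_of_le_pi (le_refl 0) (by linarith) hy1
        simpa using this
      have hgt : Real.cos (π/6) < Real.cos y :=
        Real.cos_lt_cos_of_nonneg_of_le_pi hy1.le (by linarith) hy2
      rw [Real.cos_pi_div_six] at hgt
      have hs3 : Real.sqrt 3 ^ 2 = 3 := Real.sq_sqrt (by norm_num)
      have hu : (3:ℝ)/4 < (Real.cos y)^2 := by nlinarith [Real.sqrt_nonneg 3]
      have hd : Real.cos (2*y) = 2 * (Real.cos y)^2 - 1 := Real.cos_two_mul y
      set c := Real.cos y
      set d := Real.cos (2*y)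
      have hu2 : c^2 < 1 := by nlinarith
      have hdgt : (1:ℝ)/2 < d := by rw [hd]; linarith
      have hkey : 2 * c^2 * d^2 + 2 * c^2 - 4 * d^2 > 0 := by
        rw [hd]; nlinarith [sq_nonneg (c^2 - 1), mul_pos (sub_pos.mpr hu2) hc2pos]
      have hc2 : c^2 > 0 := by positivity
      have hd2 : d^2 > 0 := by positivity
      have heq : 2 + 2/d^2 - 4/c^2 = (2 * c^2 * d^2 + 2 * c^2 - 4 * d^2)/(c^2 * d^2) := by
        field_simp
      rw [heq]
      positivity
  have h0 : (0:ℝ) ∈ Set.Icc 0 (π/6) := ⟨le_refl 0, by linarith⟩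
  have hx' : x ∈ Set.Icc 0 (π/6) := ⟨hx.1.le, hx.2⟩
  have := hmono h0 hx' hx.1
  simpa [Real.tan_zero] using this

/-- Passing from the circumscribed regular n-gon to the circumscribed regular 2n-gon
removes more than half of the area remaining between the polygon and the circle. -/
theorem circumscribed_doubling_step (n : ℕ) (hn : 3 ≤ n) :
    (2 * n : ℝ) * Real.tan (Real.pi / (2 * n)) - Real.pi <
      ((n : ℝ) * Real.tan (Real.pi / n) - Real.pi) / 2 := by
  have hpi := Real.pi_pos
  have hn' : (3:ℝ) ≤ n := by exact_mod_cast hn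
  have hnpos : (0:ℝ) < n := by linarith
  set θ := π / (2*n) with hθ
  have hθpos : 0 < θ := by positivity
  have hθle : θ ≤ π/6 := by
    rw [hθ, div_le_div_iff₀ (by linarith) (by norm_num)]
    nlinarith
  have h2θ : 2 * θ = π / n := by
    rw [hθ]; field_simp
  have hk := key ⟨hθpos, hθle⟩
  rw [h2θ] at hk
  have hπθ : π = 2 * n * θ := by rw [hθ]; field_simp
  nlinarith [hk]
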